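/- If x, y, z are nonempty words over {A,B,C} such that x y x z y z x y x is squarefree, then no two of x, y, z can both have the form 'letter, other letter, first letter' (i.e., at most one of x, y, z is of the form UVU with U ≠ V letters). -/

import Mathlib

inductive T where
  | A | B | C
deriving DecidableEq, Repr

open T

def P : T → List T
  | A => [A,B,C,B,A,C,B,C,A,B,C,B,A]
  | B => [B,C,A,C,B,A,C,A,B,C,A,C,B]
  | C => [C,A,B,A,C,B,A,B,C,A,B,A,C]

def Pw (w : List T) : List T := w.flatMap P

def SqFree (w : List T) : Prop := ∀ x : List T, x ≠ [] → ¬ (x ++ x) <:+: w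

def rot : T → T
  | A => B
  | B => C
  | C => A

def rotw (w : List T) : List T := w.map rot

def refT : T → T
  | A => A
  | B => C
  | C => B

def reflw (w : List T) : List T := w.map refT

def OccursAt (w v : List T) (i : ℕ) : Prop := (v.drop i).take w.length = w

def IsUVU (w : List T) : Prop := ∃ u v : T, u ≠ v ∧ w = [u, v, u]

instance : Fintype T := ⟨{A, B, C}, fun x => by cases x <;> simp⟩

def hasSq (w : List T) : Bool :=
  decide (∃ n < w.length, ∃ i < w.length, n ≠ 0 ∧ i + n + n ≤ w.length ∧
    (w.drop i).take n = (w.drop (i+n)).take n)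

lemma sqfree_infix {w v : List T} (h : SqFree w) (hv : v <:+: w) : SqFree v :=
  fun s hs hinf => h s hs (hinf.trans hv)

lemma not_sqfree_of_hasSq {w : List T} (hw : hasSq w = true) : ¬ SqFree w := by
  intro hsf
  simp only [hasSq, decide_eq_true_eq] at hw
  obtain ⟨n, hn, i, hi, hn0, hlen, heq⟩ := hw
  apply hsf ((w.drop i).take n)
  · intro hnil
    have := congrArg List.length hnil
    simp [List.length_take, List.length_drop] at this
    omega
  · have key : (w.drop i).take n ++ (w.drop i).take n = (w.drop i).take (n+n) := by
      nth_rewrite 2 [heq]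
      rw [List.take_add]
      congr 1
      rw [List.drop_drop, Nat.add_comm]
    rw [key]
    exact ((w.drop i).take_prefix (n+n)).isInfix.trans (w.drop_suffix i).isInfix

lemma caseA : ∀ u v a b f : T, u ≠ v → a ≠ b →
    (hasSq [u,v,u,a,b,a] || hasSq [a,b,a,u,v,u] || hasSq [u,v,u,f] || hasSq [a,b,a,f]) = true := by
  decide

lemma caseB : ∀ u v a b l : T, u ≠ v → a ≠ b →
    (hasSq [u,v,u,a,b,a] || hasSq [a,b,a,u,v,u] || hasSq [l,a,b,a] || hasSq [l,u,v,u]) = true := by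
  decide

theorem stmt18 (x y z : List T)
    (hx : x ≠ []) (hy : y ≠ []) (hz : z ≠ [])
    (h : SqFree (x ++ y ++ x ++ z ++ y ++ z ++ x ++ y ++ x)) :
    ¬ (IsUVU x ∧ IsUVU y) ∧ ¬ (IsUVU x ∧ IsUVU z) ∧ ¬ (IsUVU y ∧ IsUVU z) := by
  refine ⟨?_, ?_, ?_⟩
  · rintro ⟨⟨u, v, huv, rfl⟩, ⟨a, b, hab, rfl⟩⟩
    obtain ⟨f, z', rfl⟩ := List.exists_cons_of_ne_nil hz
    have hc := caseA u v a b f huv hab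
    simp only [Bool.or_eq_true] at hc
    rcases hc with ((h1 | h2) | h3) | h4
    · exact not_sqfree_of_hasSq h1 (sqfree_infix h
        ⟨[], [u,v,u] ++ (f::z') ++ [a,b,a] ++ (f::z') ++ [u,v,u] ++ [a,b,a] ++ [u,v,u],
          by simp⟩)
    · exact not_sqfree_of_hasSq h2 (sqfree_infix h
        ⟨[u,v,u], (f::z') ++ [a,b,a] ++ (f::z') ++ [u,v,u] ++ [a,b,a] ++ [u,v,u], by simp⟩)
    · exact not_sqfree_of_hasSq h3 (sqfree_infix h
        ⟨[u,v,u] ++ [a,b,a], z' ++ [a,b,a] ++ (f::z') ++ [u,v,u] ++ [a,b,a] ++ [u,v,u],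
          by simp⟩)
    · exact not_sqfree_of_hasSq h4 (sqfree_infix h
        ⟨[u,v,u] ++ [a,b,a] ++ [u,v,u] ++ (f::z'), z' ++ [u,v,u] ++ [a,b,a] ++ [u,v,u],
          by simp⟩)
  · rintro ⟨⟨u, v, huv, rfl⟩, ⟨a, b, hab, rfl⟩⟩
    obtain ⟨y₂, l, rfl⟩ := (List.eq_nil_or_concat y).resolve_left hy
    have hc := caseB u v a b l huv hab
    simp only [Bool.or_eq_true] at hc
    rcases hc with ((h1 | h2) | h3) | h4
    · exact not_sqfree_of_hasSq h1 (sqfree_infix h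
        ⟨[u,v,u] ++ (y₂ ++ [l]),
          (y₂ ++ [l]) ++ [a,b,a] ++ [u,v,u] ++ (y₂ ++ [l]) ++ [u,v,u], by simp⟩)
    · exact not_sqfree_of_hasSq h2 (sqfree_infix h
        ⟨[u,v,u] ++ (y₂ ++ [l]) ++ [u,v,u] ++ [a,b,a] ++ (y₂ ++ [l]),
          (y₂ ++ [l]) ++ [u,v,u], by simp⟩)
    · exact not_sqfree_of_hasSq h3 (sqfree_infix h
        ⟨[u,v,u] ++ (y₂ ++ [l]) ++ [u,v,u] ++ [a,b,a] ++ y₂,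
          [u,v,u] ++ (y₂ ++ [l]) ++ [u,v,u], by simp⟩)
    · exact not_sqfree_of_hasSq h4 (sqfree_infix h
        ⟨[u,v,u] ++ y₂,
          [a,b,a] ++ (y₂ ++ [l]) ++ [a,b,a] ++ [u,v,u] ++ (y₂ ++ [l]) ++ [u,v,u], by simp⟩)
  · rintro ⟨⟨a, b, hab, rfl⟩, ⟨p, q, hpq, rfl⟩⟩
    obtain ⟨x₂, l, rfl⟩ := (List.eq_nil_or_concat x).resolve_left hx
    have hc := caseB a b p q l hab hpq
    simp only [Bool.or_eq_true] at hc
    rcases hc with ((h1 | h2) | h3) | h4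
    · -- [a,b,a,p,q,p] = y ++ z : blocks 5,6
      exact not_sqfree_of_hasSq h1 (sqfree_infix h
        ⟨(x₂ ++ [l]) ++ [a,b,a] ++ (x₂ ++ [l]) ++ [p,q,p],
          (x₂ ++ [l]) ++ [a,b,a] ++ (x₂ ++ [l]), by simp⟩)
    · -- [p,q,p,a,b,a] = z ++ y : blocks 4,5
      exact not_sqfree_of_hasSq h2 (sqfree_infix h
        ⟨(x₂ ++ [l]) ++ [a,b,a] ++ (x₂ ++ [l]),
          [p,q,p] ++ (x₂ ++ [l]) ++ [a,b,a] ++ (x₂ ++ [l]), by simp⟩)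
    · -- [l,p,q,p] = [l] ++ z : blocks 3,4
      exact not_sqfree_of_hasSq h3 (sqfree_infix h
        ⟨(x₂ ++ [l]) ++ [a,b,a] ++ x₂,
          [a,b,a] ++ [p,q,p] ++ (x₂ ++ [l]) ++ [a,b,a] ++ (x₂ ++ [l]), by simp⟩)
    · -- [l,a,b,a] = [l] ++ y : blocks 1,2
      exact not_sqfree_of_hasSq h4 (sqfree_infix h
        ⟨x₂,
          (x₂ ++ [l]) ++ [p,q,p] ++ [a,b,a] ++ [p,q,p] ++ (x₂ ++ [l]) ++ [a,b,a] ++ (x₂ ++ [l]),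
          by simp⟩)
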